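/- Let M be a monoid containing elements s, t with s*t = 1 and t*s ≠ 1. If t^a * s^b = t^{a'} * s^{b'} for natural numbers a, b, a', b', then a = a' and b = b'. -/

import Mathlib

section Aux

variable {M : Type*} [Monoid M]

private lemma aux_pow_one (s t : M) (h1 : s * t = 1) : ∀ n : ℕ, s ^ n * t ^ n = 1 := by
  intro n
  induction n with
  | zero => simp
  | succ n ih =>
    rw [pow_succ, pow_succ', mul_assoc, ← mul_assoc s t, h1, one_mul, ih]

private lemma aux_t_pow (s t : M) (h1 : s * t = 1) (h2 : t * s ≠ 1) (m : ℕ) (hk : t ^ (m + 1) = 1) : False := by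
  have hs : s = t ^ m := by
    calc s = s * t ^ (m + 1) := by rw [hk, mul_one]
      _ = t ^ m := by rw [pow_succ', ← mul_assoc, h1, one_mul]
  exact h2 (by rw [hs, ← pow_succ', hk])

private lemma aux_s_pow (s t : M) (h1 : s * t = 1) (h2 : t * s ≠ 1) (m : ℕ) (hk : s ^ (m + 1) = 1) : False := by
  have ht : t = s ^ m := by
    calc t = s ^ (m + 1) * t := by rw [hk, one_mul]
      _ = s ^ m := by rw [pow_succ, mul_assoc, h1, mul_one]
  exact h2 (by rw [ht, ← pow_succ, hk])

private lemma aux_zero (s t : M) (h1 : s * t = 1) (h2 : t * s ≠ 1) : ∀ c d : ℕ, t ^ c * s ^ d = 1 → c = 0 ∧ d = 0 := by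
  intro c
  induction c with
  | zero =>
    intro d hd
    cases d with
    | zero => exact ⟨rfl, rfl⟩
    | succ m => simp only [pow_zero, one_mul] at hd; exact absurd hd (by
        intro h; exact aux_s_pow s t h1 h2 m h)
  | succ c ih =>
    intro d hd
    cases d with
    | zero =>
      simp only [pow_zero, mul_one] at hd
      exact absurd hd (fun h => aux_t_pow s t h1 h2 c h)
    | succ d =>
      have step1 : t ^ c * s ^ (d + 1) = s := by
        have := congrArg (s * ·) hd
        simp only [mul_one] at this
        calc t ^ c * s ^ (d + 1) = s * (t ^ (c + 1) * s ^ (d + 1)) := by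
              rw [pow_succ' t, ← mul_assoc, ← mul_assoc, h1, one_mul]
          _ = s := this
      have step2 : t ^ c * s ^ d = 1 := by
        have := congrArg (· * t) step1
        calc t ^ c * s ^ d = t ^ c * s ^ (d + 1) * t := by
              rw [pow_succ, mul_assoc (t ^ c), mul_assoc, h1, mul_one]
          _ = 1 := by rw [this, h1]
      obtain ⟨hc, hdz⟩ := ih d step2
      subst hc; subst hdz
      exact absurd (by simpa using hd) h2

private lemma aux_key (s t : M) (h1 : s * t = 1) (h2 : t * s ≠ 1) (a b a' b' : ℕ) (hle : a ≤ a')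
    (h : t ^ a * s ^ b = t ^ a' * s ^ b') : a = a' ∧ b = b' := by
  obtain ⟨c, rfl⟩ := Nat.exists_eq_add_of_le hle
  have hb : s ^ b = t ^ c * s ^ b' := by
    have := congrArg (s ^ a * ·) h
    calc s ^ b = s ^ a * (t ^ a * s ^ b) := by
          rw [← mul_assoc, aux_pow_one s t h1, one_mul]
      _ = s ^ a * (t ^ (a + c) * s ^ b') := this
      _ = t ^ c * s ^ b' := by
          rw [pow_add, ← mul_assoc, ← mul_assoc, aux_pow_one s t h1, one_mul]
  rcases le_total b b' with hbb | hbb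
  · obtain ⟨e, rfl⟩ := Nat.exists_eq_add_of_le hbb
    have h0 : t ^ c * s ^ e = 1 := by
      have := congrArg (· * t ^ b) hb
      calc t ^ c * s ^ e = t ^ c * s ^ (b + e) * t ^ b := by
            rw [add_comm b e, pow_add, mul_assoc (t ^ c), mul_assoc,
              aux_pow_one s t h1, mul_one]
        _ = s ^ b * t ^ b := this.symm
        _ = 1 := aux_pow_one s t h1 b
    obtain ⟨hc, he⟩ := aux_zero s t h1 h2 c e h0
    subst hc; subst he; simp
  · obtain ⟨e, rfl⟩ := Nat.exists_eq_add_of_le hbb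
    have hse : s ^ e = t ^ c := by
      have := congrArg (· * t ^ b') hb
      calc s ^ e = s ^ (b' + e) * t ^ b' := by
            rw [add_comm b' e, pow_add, mul_assoc, aux_pow_one s t h1, mul_one]
        _ = t ^ c * s ^ b' * t ^ b' := this
        _ = t ^ c := by rw [mul_assoc, aux_pow_one s t h1, mul_one]
    have h0 : t ^ (c + e) * s ^ 0 = 1 := by
      rw [pow_zero, mul_one, pow_add, ← hse, aux_pow_one s t h1]
    obtain ⟨hc, _⟩ := aux_zero s t h1 h2 (c + e) 0 h0
    have hc0 : c = 0 := by omega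
    have he0 : e = 0 := by omega
    subst hc0; subst he0; simp

end Aux

theorem pow_mul_pow_injective_of_one_sided_inverse
    {M : Type*} [Monoid M] (s t : M) (h1 : s * t = 1) (h2 : t * s ≠ 1)
    (a b a' b' : ℕ) (h : t ^ a * s ^ b = t ^ a' * s ^ b') :
    a = a' ∧ b = b' := by
  rcases le_total a a' with hle | hle
  · exact aux_key s t h1 h2 a b a' b' hle h
  · obtain ⟨ha, hb⟩ := aux_key s t h1 h2 a' b' a b hle h.symm
    exact ⟨ha.symm, hb.symm⟩
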